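/- Let G = (V,E,ℓ) be a labeled DAG with nonempty node labels and Q a query string. Every MEM ([x..y], (i,P,j)) between Q and G, where P = v_1...v_p, decomposes into a perfect chain of node MEMs: there exist positions x = i_1 < i_2 < ... < i_{p+1} = y+1 in Q such that ([i_1..i_2-1],(i,v_1,‖v_1‖)), ([i_l..i_{l+1}-1],(1,v_l,‖v_l‖)) for 1 < l < p, and ([i_p..i_{p+1}-1],(1,v_p,j)) are all node MEMs, and their concatenation equals ([x..y],(i,P,j)). -/

import Mathlib

variable {V α : Type*}

/-- The string spelled by the graph substring `(i, P, j)` (0-indexed): for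
`P = v₁ ⋯ v_k` it is `ℓ(v₁)[i..] · ℓ(v₂) ⋯ ℓ(v_{k-1}) · ℓ(v_k)[..j]`. -/
def spell (ℓ : V → List α) : ℕ → List V → ℕ → List α
  | _, [], _ => []
  | i, [v], j => ((ℓ v).take (j + 1)).drop i
  | i, v :: u :: rest, j => (ℓ v).drop i ++ spell ℓ 0 (u :: rest) j

/-- `([x..y], (i, P, j))` is an exact match between the string `Q` and the
labeled graph `(V, E, ℓ)` (all indices 0-based): `P` is a nonempty path of the
graph and `Q[x..y]` equals the string spelled by the graph substring `(i, P, j)`. -/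
def IsGraphMatch [Inhabited V] (E : V → V → Prop) (ℓ : V → List α) (Q : List α)
    (x y i : ℕ) (P : List V) (j : ℕ) : Prop :=
  P ≠ [] ∧ P.Chain' E ∧ i < (ℓ P.headI).length ∧ j < (ℓ (P.getLastD default)).length ∧
    x ≤ y ∧ y < Q.length ∧ (Q.take (y + 1)).drop x = spell ℓ i P j

/-- The left-extension of the graph substring `(i, P, j)`. -/
def leftext (E : V → V → Prop) (ℓ : V → List α) (i : ℕ) (P : List V) : Set α :=
  match P with
  | [] => ∅
  | v :: _ =>
    if 0 < i then {a | (ℓ v)[i - 1]? = some a}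
    else {a | ∃ u, E u v ∧ (ℓ u).getLast? = some a}

/-- The right-extension of the graph substring `(i, P, j)`. -/
def rightext (E : V → V → Prop) (ℓ : V → List α) (P : List V) (j : ℕ) : Set α :=
  match P.getLast? with
  | none => ∅
  | some w =>
    if j + 1 < (ℓ w).length then {a | (ℓ w)[j + 1]? = some a}
    else {a | ∃ u, E w u ∧ (ℓ u)[0]? = some a}

/-- Left-maximality of a graph match: `x = 0`, or the left-extension is empty,
or `Q[x-1]` is not in the left-extension. -/
def LeftMax (E : V → V → Prop) (ℓ : V → List α) (Q : List α) (x i : ℕ)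
    (P : List V) : Prop :=
  x = 0 ∨ ∀ a ∈ leftext E ℓ i P, Q[x - 1]? ≠ some a

/-- Right-maximality of a graph match. -/
def RightMax (E : V → V → Prop) (ℓ : V → List α) (Q : List α) (y : ℕ)
    (P : List V) (j : ℕ) : Prop :=
  y + 1 = Q.length ∨ ∀ a ∈ rightext E ℓ P j, Q[y + 1]? ≠ some a

/-- A MEM between `Q` and the graph: a match that is left-maximal or has a
non-singleton left-extension, and right-maximal or has a non-singleton
right-extension. -/
def IsGraphMEM [Inhabited V] (E : V → V → Prop) (ℓ : V → List α) (Q : List α)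
    (x y i : ℕ) (P : List V) (j : ℕ) : Prop :=
  IsGraphMatch E ℓ Q x y i P j ∧
    (LeftMax E ℓ Q x i P ∨ ¬ (leftext E ℓ i P).Subsingleton) ∧
    (RightMax E ℓ Q y P j ∨ ¬ (rightext E ℓ P j).Subsingleton)

/-- A node MEM: an exact match `Q[x..y] = ℓ(v)[i..j]` inside a single node `v`
that is maximal in the string sense or touches the node-label boundary. -/
def IsNodeMEM (Q : List α) (ℓ : V → List α) (x y i : ℕ) (v : V) (j : ℕ) : Prop :=
  i ≤ j ∧ j < (ℓ v).length ∧ x ≤ y ∧ y < Q.length ∧ y - x = j - i ∧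
    (Q.take (y + 1)).drop x = ((ℓ v).take (j + 1)).drop i ∧
    (x = 0 ∨ i = 0 ∨ Q[x - 1]? ≠ (ℓ v)[i - 1]?) ∧
    (y + 1 = Q.length ∨ j + 1 = (ℓ v).length ∨ Q[y + 1]? ≠ (ℓ v)[j + 1]?)

/-- Acyclicity of the edge relation (`G` is a DAG). -/
def IsDAG (E : V → V → Prop) : Prop := ∀ v, ¬ Relation.TransGen E v v

/-- Every graph MEM `([x..y], (i, P, j))` with `P = v₁ ⋯ v_p` decomposes into a
perfect chain of node MEMs: there are positions `x = pos₀ < pos₁ < ⋯ < pos_p = y + 1`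
such that the `l`-th piece `[pos_l .. pos_{l+1} - 1]` of `Q` is a node MEM of
`v_{l+1}`, starting at offset `i` in the first node and `0` in the others, and
ending at the label end in all but the last node, which ends at `j`. -/

def NodeMatch (Q : List α) (ℓ : V → List α) (x y i : ℕ) (v : V) (j : ℕ) : Prop :=
  i ≤ j ∧ j < (ℓ v).length ∧ x ≤ y ∧ y < Q.length ∧ y - x = j - i ∧
    (Q.take (y + 1)).drop x = ((ℓ v).take (j + 1)).drop i

lemma spell_zero_ne_nil (ℓ : V → List α) (hlab : ∀ v, ℓ v ≠ []) :
    ∀ (r : List V) (j : ℕ), r ≠ [] → spell ℓ 0 r j ≠ [] := by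
  intro r j hr
  match r with
  | [v] =>
    show ((ℓ v).take (j + 1)).drop 0 ≠ []
    rw [List.drop_zero]
    apply List.ne_nil_of_length_pos
    rw [List.length_take]
    have := List.length_pos_iff.mpr (hlab v)
    omega
  | v :: u :: t =>
    show (ℓ v).drop 0 ++ spell ℓ 0 (u :: t) j ≠ []
    simp [hlab v]

lemma strictMono_cons {n : ℕ} {f : Fin (n + 1) → ℕ} {x : ℕ} (hx : x < f 0)
    (hf : StrictMono f) : StrictMono (Fin.cons x f : Fin (n + 2) → ℕ) := by
  rw [Fin.strictMono_iff_lt_succ]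
  intro k
  induction k using Fin.cases with
  | zero => simpa using hx
  | succ k =>
    rw [← Fin.succ_castSucc, Fin.cons_succ, Fin.cons_succ]
    exact hf Fin.castSucc_lt_succ

lemma core [Inhabited V] (ℓ : V → List α) (Q : List α) (hlab : ∀ v, ℓ v ≠ [])
    (j y : ℕ) :
    ∀ (vs : List V) (x i : ℕ), vs ≠ [] → i < (ℓ vs.headI).length →
      j < (ℓ (vs.getLastD default)).length → x ≤ y → y < Q.length →
      (Q.take (y + 1)).drop x = spell ℓ i vs j →
      ∃ pos : Fin (vs.length + 1) → ℕ, StrictMono pos ∧ pos 0 = x ∧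
        pos (Fin.last vs.length) = y + 1 ∧
        ∀ l : Fin vs.length,
          NodeMatch Q ℓ (pos l.castSucc) (pos l.succ - 1)
            (if (l : ℕ) = 0 then i else 0) (vs.get l)
            (if (l : ℕ) = vs.length - 1 then j else (ℓ (vs.get l)).length - 1) := by
  intro vs
  induction vs with
  | nil => intro x i h; exact absurd rfl h
  | cons v r ih =>
    intro x i _ hi hj hxy hyQ hspell
    have hi' : i < (ℓ v).length := hi
    have htl : (Q.take (y + 1)).length = y + 1 := by
      rw [List.length_take]; exact min_eq_left (by omega)
    cases r with
    | nil =>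
      -- single node
      have hspell' : (Q.take (y + 1)).drop x = ((ℓ v).take (j + 1)).drop i := hspell
      have hj' : j < (ℓ v).length := hj
      have hc := congrArg List.length hspell'
      rw [List.length_drop, List.length_drop, htl, List.length_take,
        min_eq_left (by omega)] at hc
      -- hc : y + 1 - x = j + 1 - i
      have hij : i ≤ j := by omega
      have hmono : StrictMono (Fin.cons x (fun _ => y + 1) : Fin (0 + 2) → ℕ) :=
        strictMono_cons (by omega)
          (fun a b hab => absurd (Fin.lt_def.mp hab) (by have := a.2; have := b.2; omega))
      refine ⟨Fin.cons x (fun _ => y + 1), hmono, rfl, ?_, ?_⟩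
      · have e : Fin.last ([v].length) = Fin.succ (Fin.last 0) := rfl
        rw [e, Fin.cons_succ]
      · intro l
        have hl1 : (l : ℕ) < 1 := l.2
        have hl : l = ⟨0, Nat.one_pos⟩ := Fin.ext (show (l : ℕ) = 0 by omega)
        subst hl
        show NodeMatch Q ℓ x y i v j
        exact ⟨hij, hj', by omega, by omega, by omega, hspell'⟩
    | cons u t =>
      rw [show spell ℓ i (v :: u :: t) j = (ℓ v).drop i ++ spell ℓ 0 (u :: t) j
        from rfl] at hspell
      set D := (ℓ v).length - i with hD
      have hBne : spell ℓ 0 (u :: t) j ≠ [] := spell_zero_ne_nil ℓ hlab _ j (by simp)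
      have hBlen : 0 < (spell ℓ 0 (u :: t) j).length := List.length_pos_iff.mpr hBne
      have hc := congrArg List.length hspell
      rw [List.length_drop, htl, List.length_append, List.length_drop] at hc
      -- hc : y + 1 - x = (ℓ v).length - i + (spell ...).length
      have hxd : x + D ≤ y := by omega
      have hA : (Q.take (x + D)).drop x = (ℓ v).drop i := by
        have h1 : (Q.take (x + D)).drop x = ((Q.take (y + 1)).drop x).take D := by
          rw [List.drop_take, List.drop_take, List.take_take,
            min_eq_left (by omega : D ≤ y + 1 - x)]
          congr 1
          omega
        rw [h1, hspell, List.take_left' List.length_drop]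
      have hB : (Q.take (y + 1)).drop (x + D) = spell ℓ 0 (u :: t) j := by
        have h2 : (Q.take (y + 1)).drop (x + D) = ((Q.take (y + 1)).drop x).drop D := by
          rw [List.drop_drop]
        rw [h2, hspell, List.drop_left' List.length_drop]
      have hj' : j < (ℓ ((u :: t).getLastD default)).length := by
        have he : (v :: u :: t).getLastD default = (u :: t).getLastD default := by
          rw [List.getLastD_eq_getLast?, List.getLastD_eq_getLast?,
            List.getLast?_cons_cons]
        rwa [he] at hj
      obtain ⟨pos', hmono', h0', hlast', hpiece'⟩ :=
        ih (x + D) 0 (by simp) (List.length_pos_iff.mpr (hlab u)) hj' hxd hyQ hB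
      refine ⟨Fin.cons x pos', strictMono_cons (by rw [h0']; omega) hmono', rfl, ?_, ?_⟩
      · have e : Fin.last ((v :: u :: t).length) = Fin.succ (Fin.last ((u :: t).length)) := rfl
        rw [e, Fin.cons_succ]
        exact hlast'
      · intro l
        induction l using Fin.cases with
        | zero =>
          show NodeMatch Q ℓ x (pos' 0 - 1) i v ((ℓ v).length - 1)
          rw [h0']
          refine ⟨by omega, by omega, by omega, by omega, by omega, ?_⟩
          rw [show x + D - 1 + 1 = x + D by omega,
            show (ℓ v).length - 1 + 1 = (ℓ v).length by omega, List.take_length]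
          exact hA
        | succ k =>
          have hp := hpiece' k
          simp only [ite_self] at hp
          rw [← Fin.succ_castSucc, Fin.cons_succ, Fin.cons_succ, List.get_cons_succ',
            Fin.val_succ]
          rw [if_neg (by omega)]
          simp only [List.length_cons] at hp ⊢
          by_cases hk : (k : ℕ) = t.length + 1 - 1
          · rw [if_pos hk] at hp
            rw [if_pos (by omega)]
            exact hp
          · rw [if_neg hk] at hp
            rw [if_neg (by omega)]
            exact hp

theorem graphMEM_decomposes_into_perfect_chain_of_nodeMEMs [Inhabited V]
    (E : V → V → Prop) (ℓ : V → List α) (Q : List α)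
    (hdag : IsDAG E) (hlab : ∀ v, ℓ v ≠ [])
    (x y i j : ℕ) (vs : List V)
    (hMEM : IsGraphMEM E ℓ Q x y i vs j) :
    ∃ pos : Fin (vs.length + 1) → ℕ, StrictMono pos ∧
      pos 0 = x ∧ pos (Fin.last vs.length) = y + 1 ∧
      ∀ l : Fin vs.length,
        IsNodeMEM Q ℓ (pos l.castSucc) (pos l.succ - 1)
          (if (l : ℕ) = 0 then i else 0) (vs.get l)
          (if (l : ℕ) = vs.length - 1 then j else (ℓ (vs.get l)).length - 1) := by
  obtain ⟨⟨hne, _hchain, hi, hj, hxy, hyQ, hsp⟩, hL, hR⟩ := hMEM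
  obtain ⟨v, t, rfl⟩ := List.exists_cons_of_ne_nil hne
  obtain ⟨pos, hmono, h0, hlast, hpiece⟩ :=
    core ℓ Q hlab j y (v :: t) x i hne hi hj hxy hyQ hsp
  refine ⟨pos, hmono, h0, hlast, fun l => ?_⟩
  have hp := hpiece l
  unfold NodeMatch at hp
  obtain ⟨m1, m2, m3, m4, m5, m6⟩ := hp
  refine ⟨m1, m2, m3, m4, m5, m6, ?_, ?_⟩
  · -- left maximality
    by_cases hl0 : (l : ℕ) = 0
    · rw [if_pos hl0]
      have hcs : l.castSucc = 0 := Fin.ext (by simp [hl0])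
      rw [hcs, h0]
      have hlmk : l = ⟨0, by simp⟩ := Fin.ext hl0
      have hget : (v :: t).get l = v := by rw [hlmk]; rfl
      rw [hget]
      by_cases hi0 : i = 0
      · exact Or.inr (Or.inl hi0)
      · have hipos : 0 < i := Nat.pos_of_ne_zero hi0
        have hle : leftext E ℓ i (v :: t) = {a | (ℓ v)[i - 1]? = some a} := by
          show (if 0 < i then {a | (ℓ v)[i - 1]? = some a}
            else {a | ∃ u, E u v ∧ (ℓ u).getLast? = some a}) = _
          rw [if_pos hipos]
        have hsub : (leftext E ℓ i (v :: t)).Subsingleton := by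
          intro a ha b hb
          rw [hle] at ha hb
          exact Option.some.inj (ha.symm.trans hb)
        have hLM : LeftMax E ℓ Q x i (v :: t) := hL.resolve_right (fun h => h hsub)
        rcases hLM with h | h
        · exact Or.inl h
        · refine Or.inr (Or.inr ?_)
          have hiv : i - 1 < (ℓ v).length := by
            have : i < (ℓ v).length := hi
            omega
          rw [List.getElem?_eq_getElem hiv]
          apply h
          rw [hle]
          exact List.getElem?_eq_getElem hiv
    · rw [if_neg hl0]
      exact Or.inr (Or.inl rfl)
  · -- right maximality
    by_cases hll : (l : ℕ) = (v :: t).length - 1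
    · rw [if_pos hll]
      have hls : l.succ = Fin.last ((v :: t).length) := by
        apply Fin.ext
        have h2 := l.2
        simp only [Fin.val_succ, Fin.val_last, List.length_cons] at *
        omega
      rw [hls, hlast, Nat.add_sub_cancel]
      have hlmk : l = ⟨(v :: t).length - 1, by have := l.2; omega⟩ := Fin.ext hll
      have hget : (v :: t).get l = (v :: t).getLast (List.cons_ne_nil v t) := by
        rw [hlmk, List.getLast_eq_getElem]; rfl
      rw [hget]
      have hjw : j < (ℓ ((v :: t).getLast (List.cons_ne_nil v t))).length := by
        have he : (v :: t).getLastD default = (v :: t).getLast (List.cons_ne_nil v t) := by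
          rw [List.getLastD_eq_getLast?,
            List.getLast?_eq_getLast (List.cons_ne_nil v t)]
          rfl
        rwa [he] at hj
      by_cases hje : j + 1 = (ℓ ((v :: t).getLast (List.cons_ne_nil v t))).length
      · exact Or.inr (Or.inl hje)
      · have hjlt : j + 1 < (ℓ ((v :: t).getLast (List.cons_ne_nil v t))).length := by omega
        have hre : rightext E ℓ (v :: t) j =
            {a | (ℓ ((v :: t).getLast (List.cons_ne_nil v t)))[j + 1]? = some a} := by
          unfold rightext
          rw [List.getLast?_eq_getLast (List.cons_ne_nil v t)]
          show (if j + 1 < (ℓ ((v :: t).getLast (List.cons_ne_nil v t))).length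
            then {a | (ℓ ((v :: t).getLast (List.cons_ne_nil v t)))[j + 1]? = some a}
            else {a | ∃ u, E ((v :: t).getLast (List.cons_ne_nil v t)) u ∧ (ℓ u)[0]? = some a}) = _
          rw [if_pos hjlt]
        have hsub : (rightext E ℓ (v :: t) j).Subsingleton := by
          intro a ha b hb
          rw [hre] at ha hb
          exact Option.some.inj (ha.symm.trans hb)
        have hRM : RightMax E ℓ Q y (v :: t) j := hR.resolve_right (fun h => h hsub)
        rcases hRM with h | h
        · exact Or.inl h
        · refine Or.inr (Or.inr ?_)
          rw [List.getElem?_eq_getElem hjlt]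
          apply h
          rw [hre]
          exact List.getElem?_eq_getElem hjlt
    · rw [if_neg hll]
      refine Or.inr (Or.inl ?_)
      have h1 : 0 < (ℓ ((v :: t).get l)).length := List.length_pos_iff.mpr (hlab _)
      omega
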